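/- Every infinite connected graph contains as an induced subgraph one of: an infinite complete graph K_infty, an infinite star K_{1,infty}, or a ray P_infty. -/

import Mathlib

/-- Infinite Ramsey theorem for graphs: every infinite vertex set contains an
infinite subset that is either a clique or independent. -/
lemma ramsey_pairs {V : Type*} (G : SimpleGraph V) {S : Set V} (hS : S.Infinite) :
    ∃ T : Set V, T ⊆ S ∧ T.Infinite ∧
      ((∀ x ∈ T, ∀ y ∈ T, x ≠ y → G.Adj x y) ∨
       (∀ x ∈ T, ∀ y ∈ T, x ≠ y → ¬ G.Adj x y)) := by
  classical
  have step : ∀ A : Set V, A.Infinite → ∃ p : V × Set V, p.2.Infinite ∧ p.1 ∈ A ∧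
      p.2 ⊆ A ∧ p.1 ∉ p.2 ∧
      ((∀ x ∈ p.2, G.Adj p.1 x) ∨ (∀ x ∈ p.2, ¬ G.Adj p.1 x)) := by
    intro A hA
    obtain ⟨a, ha⟩ := hA.nonempty
    by_cases h : {x ∈ A | x ≠ a ∧ G.Adj a x}.Infinite
    · exact ⟨(a, _), h, ha, fun x hx => hx.1, fun hx => hx.2.1 rfl,
        Or.inl fun x hx => hx.2.2⟩
    · refine ⟨(a, {x ∈ A | x ≠ a ∧ ¬ G.Adj a x}), ?_, ha, fun x hx => hx.1,
        fun hx => hx.2.1 rfl, Or.inr fun x hx => hx.2.2⟩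
      have hinf : ((A \ {a}) \ {x ∈ A | x ≠ a ∧ G.Adj a x}).Infinite :=
        (hA.diff (Set.finite_singleton a)).diff (Set.not_infinite.mp h)
      refine hinf.mono ?_
      intro x hx
      have hxA : x ∈ A := hx.1.1
      have hxa : x ≠ a := hx.1.2
      by_cases hadj : G.Adj a x
      · exact absurd ⟨hxA, hxa, hadj⟩ hx.2
      · exact ⟨hxA, hxa, hadj⟩
  let st : ℕ → {A : Set V // A.Infinite} := fun n =>
    Nat.rec ⟨S, hS⟩ (fun _ p => ⟨((step p.1 p.2).choose).2, (step p.1 p.2).choose_spec.1⟩) n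
  let a : ℕ → V := fun n => ((step (st n).1 (st n).2).choose).1
  have ha_mem : ∀ n, a n ∈ (st n).1 := fun n => (step (st n).1 (st n).2).choose_spec.2.1
  have hsub : ∀ n, (st (n+1)).1 ⊆ (st n).1 := fun n =>
    (step (st n).1 (st n).2).choose_spec.2.2.1
  have ha_not : ∀ n, a n ∉ (st (n+1)).1 := fun n =>
    (step (st n).1 (st n).2).choose_spec.2.2.2.1
  have hcolor : ∀ n, (∀ x ∈ (st (n+1)).1, G.Adj (a n) x) ∨
      (∀ x ∈ (st (n+1)).1, ¬ G.Adj (a n) x) := fun n =>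
    (step (st n).1 (st n).2).choose_spec.2.2.2.2
  have hmono : ∀ m n, m ≤ n → (st n).1 ⊆ (st m).1 := by
    intro m n h
    induction n, h using Nat.le_induction with
    | base => exact subset_rfl
    | succ k hk ih => exact (hsub k).trans ih
  have hainj : Function.Injective a := by
    intro m n hmn
    by_contra hne
    rcases Nat.lt_or_ge m n with h | h
    · exact ha_not m (hmn ▸ hmono (m+1) n h (ha_mem n))
    · have h' : n < m := lt_of_le_of_ne h (Ne.symm hne)
      exact ha_not n (hmn ▸ hmono (n+1) m h' (ha_mem m))
  have key : ∀ m n, m < n → a n ∈ (st (m+1)).1 := fun m n h => hmono (m+1) n h (ha_mem n)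
  set P : ℕ → Prop := fun n => ∀ x ∈ (st (n+1)).1, G.Adj (a n) x with hP
  have main : ∀ I : Set ℕ, I.Infinite →
      ((∀ n ∈ I, ∀ x ∈ (st (n+1)).1, G.Adj (a n) x) ∨
       (∀ n ∈ I, ∀ x ∈ (st (n+1)).1, ¬ G.Adj (a n) x)) →
      ∃ T : Set V, T ⊆ S ∧ T.Infinite ∧
        ((∀ x ∈ T, ∀ y ∈ T, x ≠ y → G.Adj x y) ∨
         (∀ x ∈ T, ∀ y ∈ T, x ≠ y → ¬ G.Adj x y)) := by
    intro I hI hcase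
    refine ⟨a '' I, ?_, hI.image hainj.injOn, ?_⟩
    · rintro x ⟨m, _, rfl⟩
      exact hmono 0 m (Nat.zero_le m) (ha_mem m)
    · rcases hcase with hc | hc
      · left
        rintro x ⟨m, hm, rfl⟩ y ⟨n, hn, rfl⟩ hne
        have hmn : m ≠ n := fun h => hne (congrArg a h)
        rcases Nat.lt_or_ge m n with h | h
        · exact hc m hm _ (key m n h)
        · exact (hc n hn _ (key n m (lt_of_le_of_ne h (Ne.symm hmn)))).symm
      · right
        rintro x ⟨m, hm, rfl⟩ y ⟨n, hn, rfl⟩ hne hadj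
        have hmn : m ≠ n := fun h => hne (congrArg a h)
        rcases Nat.lt_or_ge m n with h | h
        · exact hc m hm _ (key m n h) hadj
        · exact hc n hn _ (key n m (lt_of_le_of_ne h (Ne.symm hmn))) hadj.symm
  by_cases hI : {n | P n}.Infinite
  · exact main _ hI (Or.inl fun n hn => hn)
  · have hI' : {n | ¬ P n}.Infinite := by
      by_contra h
      rw [Set.not_infinite] at hI h
      have : (Set.univ : Set ℕ).Finite := by
        refine (hI.union h).subset ?_
        intro n _
        by_cases hn : P n
        · exact Or.inl hn
        · exact Or.inr hn
      exact Set.infinite_univ this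
    refine main _ hI' (Or.inr ?_)
    intro n hn
    rcases hcolor n with h | h
    · exact absurd h hn
    · exact h

/-- A locally finite, infinite, connected graph contains a geodesic ray. -/
lemma exists_geodesic_ray {V : Type*} [Infinite V] (G : SimpleGraph V)
    (hconn : G.Connected) (hfin : ∀ v, (G.neighborSet v).Finite) :
    ∃ f : ℕ → V, (∀ n, G.dist (f 0) (f n) = n) ∧ ∀ n, G.Adj (f (n+1)) (f n) := by
  classical
  obtain ⟨v₀⟩ := hconn.nonempty
  -- every vertex other than v₀ has a "parent": a neighbor strictly closer to v₀
  have hpar : ∀ v, v ≠ v₀ → ∃ w, G.Adj v w ∧ G.dist v₀ w + 1 = G.dist v₀ v := by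
    intro v hv
    have hr : G.Reachable v v₀ := hconn.preconnected v v₀
    have hd : 0 < G.dist v v₀ := hr.pos_dist_of_ne hv
    obtain ⟨p, hp⟩ := hr.exists_walk_length_eq_dist
    cases p with
    | nil => exact absurd rfl hv
    | @cons _ w _ hadj q =>
      refine ⟨w, hadj, ?_⟩
      have h1 : G.dist v₀ w ≤ q.length := by
        rw [SimpleGraph.dist_comm]
        exact SimpleGraph.dist_le q
      have h2 : G.dist v₀ v ≤ G.dist v₀ w + G.dist w v := hconn.dist_triangle
      have h3 : G.dist w v = 1 := SimpleGraph.dist_eq_one_iff_adj.mpr hadj.symm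
      have h4 : q.length + 1 = G.dist v v₀ := by
        simpa [SimpleGraph.Walk.length_cons] using hp
      have h5 : G.dist v v₀ = G.dist v₀ v := SimpleGraph.dist_comm
      omega
  choose! g hg1 hg2 using hpar
  -- make the parent of v₀ be v₀ itself
  set g' : V → V := fun v => if v = v₀ then v₀ else g v with hg'
  have hg'1 : ∀ v, v ≠ v₀ → G.Adj v (g' v) := by
    intro v hv; simpa [hg', hv] using hg1 v hv
  have hg'2 : ∀ v, v ≠ v₀ → G.dist v₀ (g' v) + 1 = G.dist v₀ v := by
    intro v hv; simpa [hg', hv] using hg2 v hv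
  -- iterating the parent map reaches v₀
  have hiter : ∀ d v, G.dist v₀ v = d → g'^[d] v = v₀ := by
    intro d
    induction d with
    | zero =>
      intro v hv
      exact ((hconn.dist_eq_zero_iff).mp hv).symm
    | succ d ih =>
      intro v hv
      have hvne : v ≠ v₀ := by
        intro h; subst h; simp [SimpleGraph.dist_self] at hv
      rw [Function.iterate_succ_apply]
      exact ih (g' v) (by have := hg'2 v hvne; omega)
  -- descendants
  set D : V → Set V := fun v => {w | ∃ k, g'^[k] w = v} with hD
  have hD0 : (D v₀).Infinite := by
    have : D v₀ = Set.univ := by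
      ext w
      simp only [hD, Set.mem_setOf_eq, Set.mem_univ, iff_true]
      exact ⟨G.dist v₀ w, hiter _ w rfl⟩
    rw [this]; exact Set.infinite_univ
  -- König step: if v has infinitely many descendants, some child does too
  have hstep : ∀ v, (D v).Infinite → ∃ c, G.Adj c v ∧
      G.dist v₀ c = G.dist v₀ v + 1 ∧ (D c).Infinite := by
    intro v hv
    set C : Set V := {c | g' c = v ∧ c ≠ v} with hC
    have hCne : ∀ c ∈ C, c ≠ v₀ := by
      intro c hcmem hce
      obtain ⟨hc1, hc2⟩ := hcmem
      subst hce
      apply hc2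
      simp only [hg', if_pos rfl] at hc1
      exact hc1
    have hCfin : C.Finite := by
      refine (hfin v).subset ?_
      rintro c ⟨hc1, hc2⟩
      have : G.Adj c (g' c) := hg'1 c (hCne c ⟨hc1, hc2⟩)
      rw [hc1] at this
      exact this.symm
    have hcover : D v \ {v} ⊆ ⋃ c ∈ C, D c := by
      rintro w ⟨hw, hwv⟩
      obtain ⟨k, hk⟩ := hw
      have hex : ∃ k, g'^[k] w = v := ⟨k, hk⟩
      set k₀ := Nat.find hex with hk₀
      have hk₀spec : g'^[k₀] w = v := Nat.find_spec hex
      have hk₀pos : 0 < k₀ := by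
        rcases Nat.eq_zero_or_pos k₀ with h | h
        · exfalso; apply hwv; rw [h] at hk₀spec; simpa using hk₀spec
        · exact h
      set c := g'^[k₀ - 1] w with hc
      have hgc : g' c = v := by
        rw [hc, ← Function.iterate_succ_apply' g' (k₀ - 1) w]
        rw [Nat.succ_eq_add_one, Nat.sub_add_cancel hk₀pos]
        exact hk₀spec
      have hcv : c ≠ v := by
        intro h
        have := Nat.find_min hex (m := k₀ - 1) (by omega)
        exact this (hc ▸ h)
      refine Set.mem_biUnion (show c ∈ C from ⟨hgc, hcv⟩) ⟨k₀ - 1, rfl⟩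
    have : ∃ c ∈ C, (D c).Infinite := by
      by_contra h
      push_neg at h
      have hfinU : (⋃ c ∈ C, D c).Finite := Set.Finite.biUnion hCfin h
      have : (D v \ {v}).Finite := hfinU.subset hcover
      exact (hv.diff (Set.finite_singleton v)) this
    obtain ⟨c, hcC, hcInf⟩ := this
    have hcv₀ : c ≠ v₀ := hCne c hcC
    have hadj : G.Adj c v := by
      have := hg'1 c hcv₀
      rw [hcC.1] at this
      exact this
    have hdist : G.dist v₀ c = G.dist v₀ v + 1 := by
      have := hg'2 c hcv₀
      rw [hcC.1] at this
      omega
    exact ⟨c, hadj, hdist, hcInf⟩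
  -- build the ray
  let F : ℕ → {v : V // (D v).Infinite} := fun n =>
    Nat.rec ⟨v₀, hD0⟩
      (fun _ p => ⟨(hstep p.1 p.2).choose, (hstep p.1 p.2).choose_spec.2.2⟩) n
  have hFadj : ∀ n, G.Adj (F (n+1)).1 (F n).1 := fun n =>
    (hstep (F n).1 (F n).2).choose_spec.1
  have hFdist : ∀ n, G.dist v₀ (F (n+1)).1 = G.dist v₀ (F n).1 + 1 := fun n =>
    (hstep (F n).1 (F n).2).choose_spec.2.1
  have hF0 : (F 0).1 = v₀ := rfl
  have hFd : ∀ n, G.dist v₀ (F n).1 = n := by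
    intro n
    induction n with
    | zero => rw [hF0]; exact SimpleGraph.dist_self
    | succ n ih => rw [hFdist n, ih]
  refine ⟨fun n => (F n).1, fun n => ?_, hFadj⟩
  show G.dist (F 0).1 (F n).1 = n
  rw [hF0]
  exact hFd n

/-- Every infinite connected graph contains as an induced subgraph one of:
an infinite complete graph `K_∞` (an infinite clique), an infinite star
`K_{1,∞}` (a center adjacent to infinitely many pairwise non-adjacent leaves,
induced), or a ray `P_∞` (a one-way infinite induced path). -/
theorem infinite_connected_induced {V : Type*} [Infinite V] (G : SimpleGraph V)
    (hconn : G.Connected) :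
    (∃ s : Set V, s.Infinite ∧ ∀ x ∈ s, ∀ y ∈ s, x ≠ y → G.Adj x y) ∨
    (∃ (c : V) (s : Set V), s.Infinite ∧ c ∉ s ∧ (∀ x ∈ s, G.Adj c x) ∧
        ∀ x ∈ s, ∀ y ∈ s, ¬ G.Adj x y) ∨
    (∃ f : ℕ → V, Function.Injective f ∧
        ∀ i j, G.Adj (f i) (f j) ↔ (i = j + 1 ∨ j = i + 1)) := by
  classical
  by_cases hdeg : ∃ c, (G.neighborSet c).Infinite
  · obtain ⟨c, hc⟩ := hdeg
    obtain ⟨T, hTsub, hTinf, hhom⟩ := ramsey_pairs G hc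
    rcases hhom with h | h
    · exact Or.inl ⟨T, hTinf, h⟩
    · refine Or.inr (Or.inl ⟨c, T, hTinf, ?_, ?_, ?_⟩)
      · intro hcT
        exact G.irrefl (hTsub hcT)
      · exact fun x hx => hTsub hx
      · intro x hx y hy hadj
        by_cases hxy : x = y
        · subst hxy; exact G.irrefl hadj
        · exact h x hx y hy hxy hadj
  · push_neg at hdeg
    obtain ⟨f, hfd, hfadj⟩ := exists_geodesic_ray G hconn hdeg
    refine Or.inr (Or.inr ⟨f, ?_, ?_⟩)
    · intro i j hij
      have : G.dist (f 0) (f i) = G.dist (f 0) (f j) := by rw [hij]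
      rw [hfd i, hfd j] at this
      exact this
    · intro i j
      constructor
      · intro hadj
        have hne : i ≠ j := by
          intro h; subst h; exact G.irrefl hadj
        have h1 : G.dist (f 0) (f i) ≤ G.dist (f 0) (f j) + G.dist (f j) (f i) :=
          hconn.dist_triangle
        have h2 : G.dist (f 0) (f j) ≤ G.dist (f 0) (f i) + G.dist (f i) (f j) :=
          hconn.dist_triangle
        have h3 : G.dist (f j) (f i) = 1 := SimpleGraph.dist_eq_one_iff_adj.mpr hadj.symm
        have h4 : G.dist (f i) (f j) = 1 := SimpleGraph.dist_eq_one_iff_adj.mpr hadj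
        rw [hfd i, hfd j] at h1 h2
        omega
      · rintro (rfl | rfl)
        · exact hfadj j
        · exact (hfadj i).symm
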